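/- For any real number x ≥ 2 and any positive integer n, the function g_{n+1}(x) := 1 - F(x)^{n+1} - (1-F(x))^{n+1}, where F is the standard normal CDF, satisfies g_{n+1}(x) ≤ ((n+1)/√(2π)) · exp(-x). -/

import Mathlib

open MeasureTheory Real Set

/-- The cumulative distribution function of the standard normal distribution. -/
noncomputable def stdNormalCDF (x : ℝ) : ℝ :=
  (Real.sqrt (2 * Real.pi))⁻¹ * ∫ t in Set.Iic x, Real.exp (-t ^ 2 / 2)

lemma gauss_integrable : Integrable (fun t : ℝ => Real.exp (-t ^ 2 / 2)) := by
  have := integrable_exp_neg_mul_sq (show (0:ℝ) < 1/2 by norm_num)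
  convert this using 2 with t
  ring_nf

lemma gauss_total : (∫ t : ℝ, Real.exp (-t ^ 2 / 2)) = Real.sqrt (2 * Real.pi) := by
  have := integral_gaussian (1/2)
  have h : (fun t : ℝ => Real.exp (-t ^ 2 / 2)) = fun t : ℝ => Real.exp (-(1/2) * t ^ 2) := by
    funext t; ring_nf
  rw [h, this]
  norm_num [mul_comm]

lemma cdf_nonneg (x : ℝ) : 0 ≤ stdNormalCDF x := by
  apply mul_nonneg (inv_nonneg.2 (Real.sqrt_nonneg _))
  apply integral_nonneg
  intro t; positivity

lemma tail_eq (x : ℝ) :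
    1 - stdNormalCDF x = (Real.sqrt (2 * Real.pi))⁻¹ * ∫ t in Set.Ioi x, Real.exp (-t ^ 2 / 2) := by
  have hs : (0:ℝ) < Real.sqrt (2 * Real.pi) := Real.sqrt_pos.2 (by positivity)
  have h := intervalIntegral.integral_Iic_add_Ioi (gauss_integrable.integrableOn (s := Iic x))
    (gauss_integrable.integrableOn (s := Ioi x))
  rw [gauss_total] at h
  unfold stdNormalCDF
  have hinv := inv_mul_cancel₀ hs.ne'
  linear_combination (-1 : ℝ) * hinv - (Real.sqrt (2 * Real.pi))⁻¹ * h

lemma tail_nonneg (x : ℝ) : stdNormalCDF x ≤ 1 := by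
  have h := tail_eq x
  have : 0 ≤ (Real.sqrt (2 * Real.pi))⁻¹ * ∫ t in Set.Ioi x, Real.exp (-t ^ 2 / 2) := by
    apply mul_nonneg (inv_nonneg.2 (Real.sqrt_nonneg _))
    apply integral_nonneg
    intro t; positivity
  linarith

lemma tail_bd (x : ℝ) (hx : 2 ≤ x) :
    1 - stdNormalCDF x ≤ (Real.sqrt (2 * Real.pi))⁻¹ * Real.exp (-x) := by
  rw [tail_eq x]
  have hs : (0:ℝ) ≤ (Real.sqrt (2 * Real.pi))⁻¹ := inv_nonneg.2 (Real.sqrt_nonneg _)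
  apply mul_le_mul_of_nonneg_left _ hs
  rw [← integral_exp_neg_Ioi x]
  apply setIntegral_mono_on (gauss_integrable.integrableOn)
    (exp_neg_integrableOn_Ioi x one_pos |>.congr_fun (by intro t _; simp) measurableSet_Ioi)
    measurableSet_Ioi
  intro t ht
  simp only [mem_Ioi] at ht
  apply Real.exp_le_exp.2
  nlinarith

theorem tail_bound (n : ℕ) (hn : 0 < n) (x : ℝ) (hx : 2 ≤ x) :
    1 - (stdNormalCDF x) ^ (n + 1) - (1 - stdNormalCDF x) ^ (n + 1) ≤
      ((n + 1 : ℝ) / Real.sqrt (2 * Real.pi)) * Real.exp (-x) := by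
  set p := stdNormalCDF x with hp
  have hp0 : 0 ≤ p := cdf_nonneg x
  have hp1 : p ≤ 1 := tail_nonneg x
  have hq : 0 ≤ (1 - p) ^ (n + 1) := pow_nonneg (by linarith) _
  have hbern : 1 + (n + 1 : ℝ) * (p - 1) ≤ p ^ (n + 1) := by
    have := one_add_mul_le_pow (a := p - 1) (by linarith) (n + 1)
    push_cast at this ⊢
    rw [show (1 + (p - 1)) = p by ring] at this
    exact this
  have htb := tail_bd x hx
  have hs : (0:ℝ) ≤ (Real.sqrt (2 * Real.pi))⁻¹ := inv_nonneg.2 (Real.sqrt_nonneg _)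
  have hn1 : (0:ℝ) ≤ (n + 1 : ℝ) := by positivity
  have key : ((n+1:ℝ)) * (1 - p) ≤ (n + 1 : ℝ) * ((Real.sqrt (2 * Real.pi))⁻¹ * Real.exp (-x)) :=
    mul_le_mul_of_nonneg_left htb hn1
  rw [div_eq_mul_inv]
  nlinarith [key]
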